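/- Let n ≥ 1, let u ≥ 1 be an integer, let λ_1, …, λ_n be complex numbers such that λ_1^u, …, λ_n^u are pairwise distinct, let α_1, …, α_n be nonzero complex numbers, and set φ_j = Σ_{i=1}^n α_i λ_i^j. Let ⁰ᵤH_n and ᵘᵤH_n be the n×n Hankel matrices with (k,l) entries φ_{(k+l)u} and φ_{u+(k+l)u} respectively. Then for a complex number λ, det(ᵘᵤH_n − λ · ⁰ᵤH_n) = 0 if and only if λ ∈ {λ_1^u, …, λ_n^u}; that is, the generalized eigenvalues of the pencil (ᵘᵤH_n, ⁰ᵤH_n) are exactly λ_1^u, …, λ_n^u. -/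

import Mathlib

/-- If `λ 1 ^ u, …, λ n ^ u` are pairwise distinct and the `α i` are
nonzero, then the generalized eigenvalues of the decimated Hankel pencil
`(ᵘᵤH_n, ⁰ᵤH_n)` built from the samples `φ j = ∑ i, α i * λ i ^ j` are exactly
`λ 1 ^ u, …, λ n ^ u`. -/
theorem decimated_hankel_pencil_generalized_eigenvalues
    (n : ℕ) (hn : 1 ≤ n) (u : ℕ) (hu : 1 ≤ u) (lam α : Fin n → ℂ)
    (hlamu : Function.Injective fun i => lam i ^ u) (hα : ∀ i, α i ≠ 0)
    (φ : ℕ → ℂ) (hφ : ∀ j : ℕ, φ j = ∑ i, α i * lam i ^ j)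
    (H0 Hu : Matrix (Fin n) (Fin n) ℂ)
    (hH0 : ∀ k l : Fin n, H0 k l = φ (((k : ℕ) + (l : ℕ)) * u))
    (hHu : ∀ k l : Fin n, Hu k l = φ (u + ((k : ℕ) + (l : ℕ)) * u))
    (z : ℂ) :
    (Hu - z • H0).det = 0 ↔ ∃ i, z = lam i ^ u := by
  set μ : Fin n → ℂ := fun i => lam i ^ u with hμ
  set d : Fin n → ℂ := fun i => α i * (μ i - z) with hd
  have hM : Hu - z • H0 =
      (Matrix.vandermonde μ).transpose * Matrix.diagonal d * Matrix.vandermonde μ := by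
    ext k l
    have hR : ((Matrix.vandermonde μ).transpose * Matrix.diagonal d *
        Matrix.vandermonde μ) k l = ∑ j, μ j ^ (k : ℕ) * (d j * μ j ^ (l : ℕ)) := by
      rw [Matrix.mul_assoc, Matrix.mul_apply]
      refine Finset.sum_congr rfl fun j _ => ?_
      rw [Matrix.diagonal_mul, Matrix.transpose_apply, Matrix.vandermonde_apply,
        Matrix.vandermonde_apply]
    rw [Matrix.sub_apply, Matrix.smul_apply, hH0, hHu, hφ, hφ, hR, smul_eq_mul,
      Finset.mul_sum, ← Finset.sum_sub_distrib]
    refine Finset.sum_congr rfl fun j _ => ?_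
    have h1 : u + ((k : ℕ) + (l : ℕ)) * u = u * ((k : ℕ) + (l : ℕ) + 1) := by ring
    have h2 : ((k : ℕ) + (l : ℕ)) * u = u * ((k : ℕ) + (l : ℕ)) := by ring
    simp only [hd, hμ, h1, h2, pow_mul, pow_add, pow_one]
    ring
  have hdet : (Hu - z • H0).det =
      (Matrix.vandermonde μ).det ^ 2 * ∏ i, d i := by
    rw [hM, Matrix.det_mul, Matrix.det_mul, Matrix.det_transpose, Matrix.det_diagonal]
    ring
  have hV : (Matrix.vandermonde μ).det ≠ 0 := by
    rw [Matrix.det_vandermonde]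
    refine Finset.prod_ne_zero_iff.2 fun i _ => Finset.prod_ne_zero_iff.2 fun j hj => ?_
    rw [Finset.mem_Ioi] at hj
    exact sub_ne_zero.2 fun h => hj.ne' (hlamu h)
  rw [hdet, mul_eq_zero]
  constructor
  · rintro (h | h)
    · exact absurd h (pow_ne_zero _ hV)
    · obtain ⟨i, _, hi⟩ := Finset.prod_eq_zero_iff.1 h
      rcases mul_eq_zero.1 hi with h' | h'
      · exact absurd h' (hα i)
      · exact ⟨i, (sub_eq_zero.1 h').symm⟩
  · rintro ⟨i, rfl⟩
    refine Or.inr (Finset.prod_eq_zero (Finset.mem_univ i) ?_)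
    simp [hd, hμ]
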